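/- arXiv:2605.07410 — 3 statements merged into one kernel-verified Lean document; each statement's English description precedes it below -/
import Mathlib

section
/- Fix an odd positive integer N and a real number M with 2 < M < 4N − 4. Let V be the complex inner product space of functions (Fin(2N) → Fin 2) → ℂ with the standard inner product, with standard orthonormal basis {e_f : f : Fin(2N) → Fin 2}. For j = 1, …, 2N−1 let h_j be the self-adjoint linear endomorphism of V acting diagonally by h_j e_f = (1 − (−1)^{f(j)+f(j+1)}) e_f (the Ising bond term I − σ_j^Z σ_{j+1}^Z). Set H := Σ_{j=1}^{2N−1} h_j, B := h_N, H' := H − B, H̄' := H'·E^{H'}((−M,M)) + M·E^{H'}([M,∞)), and H̄ := B + H̄'. Then ‖(H − H̄)·E^{H̄}((−∞,M])‖ ≥ 4N − 4 − M. -/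
/-- The spectral projection `E^T(I)` of an endomorphism `T` of a finite-dimensional
complex inner product space: the orthogonal projection onto the span of all
eigenvectors of `T` whose eigenvalue lies in `I ⊆ ℝ`. -/
noncomputable def specProj {V : Type*} [NormedAddCommGroup V] [InnerProductSpace ℂ V]
    [FiniteDimensional ℂ V] (T : V →L[ℂ] V) (I : Set ℝ) : V →L[ℂ] V :=
  (⨆ μ ∈ I, Module.End.eigenspace (↑T : V →ₗ[ℂ] V) (μ : ℂ)).subtypeL.comp
    (Submodule.orthogonalProjectionOnto (⨆ μ ∈ I, Module.End.eigenspace (↑T : V →ₗ[ℂ] V) (μ : ℂ)))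

/-- The energy-truncated operator `T̄ := T·E^T((−M,M)) + M·E^T([M,∞))`. -/
noncomputable def etrunc {V : Type*} [NormedAddCommGroup V] [InnerProductSpace ℂ V]
    [FiniteDimensional ℂ V] (T : V →L[ℂ] V) (M : ℝ) : V →L[ℂ] V :=
  T * specProj T (Set.Ioo (-M) M) + (M : ℂ) • specProj T (Set.Ici M)

/-- The diagonal operator on `EuclideanSpace ℂ ι` multiplying the `i`-th coordinate
by `c i`. -/
noncomputable def diagOp {ι : Type*} [Fintype ι] [DecidableEq ι] (c : ι → ℂ) :
    EuclideanSpace ℂ ι →L[ℂ] EuclideanSpace ℂ ι :=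
  LinearMap.toContinuousLinearMap
    { toFun := fun g => WithLp.toLp 2 fun i => c i * g i
      map_add' := fun x y => by
        ext i
        simp [EuclideanSpace, PiLp.add_apply, mul_add]
      map_smul' := fun m x => by
        ext i
        simp [EuclideanSpace, PiLp.smul_apply, smul_eq_mul]
        ring }

/-- The Ising bond term `h_k = I − σ_k^Z σ_{k+1}^Z` acting on the chain of `2N`
spins, for the bond `k` joining sites `k` and `k+1` (`0`-indexed): it acts
diagonally on the configuration basis by
`h_k e_f = (1 − (−1)^{f(k)+f(k+1)}) e_f`. -/
noncomputable def bondOp (N : ℕ) (k : Fin (2 * N - 1)) :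
    EuclideanSpace ℂ (Fin (2 * N) → Fin 2) →L[ℂ] EuclideanSpace ℂ (Fin (2 * N) → Fin 2) :=
  diagOp fun f =>
    1 - (-1 : ℂ) ^ (((f ⟨k.1, by have := k.2; omega⟩ : Fin 2) : ℕ) +
      ((f ⟨k.1 + 1, by have := k.2; omega⟩ : Fin 2) : ℕ))

/-! Auxiliary lemmas. -/

lemma diagOp_apply {ι : Type*} [Fintype ι] [DecidableEq ι] (c : ι → ℂ)
    (g : EuclideanSpace ℂ ι) (i : ι) : diagOp c g i = c i * g i := rfl

lemma diagOp_single {ι : Type*} [Fintype ι] [DecidableEq ι] (c : ι → ℂ) (f : ι) :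
    diagOp c (EuclideanSpace.single f 1) = c f • EuclideanSpace.single f 1 := by
  ext i
  simp only [diagOp_apply, PiLp.smul_apply, EuclideanSpace.single_apply, smul_eq_mul]
  split <;> simp [*]

lemma specProj_fix {V : Type*} [NormedAddCommGroup V] [InnerProductSpace ℂ V]
    [FiniteDimensional ℂ V] (T : V →L[ℂ] V) (I : Set ℝ) (μ : ℝ) (hμ : μ ∈ I) (x : V)
    (hx : T x = (μ : ℂ) • x) : specProj T I x = x := by
  have hm : x ∈ ⨆ ν ∈ I, Module.End.eigenspace (↑T : V →ₗ[ℂ] V) (ν : ℂ) := by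
    refine (le_iSup₂ (f := fun ν (_ : ν ∈ I) =>
      Module.End.eigenspace (↑T : V →ₗ[ℂ] V) (ν : ℂ)) μ hμ) ?_
    rw [Module.End.mem_eigenspace_iff]
    exact hx
  exact (Submodule.starProjection_eq_self_iff).mpr hm

lemma specProj_zero {V : Type*} [NormedAddCommGroup V] [InnerProductSpace ℂ V]
    [FiniteDimensional ℂ V] (T : V →L[ℂ] V) (I : Set ℝ) (x : V)
    (hx : x ∈ (⨆ μ ∈ I, Module.End.eigenspace (↑T : V →ₗ[ℂ] V) (μ : ℂ))ᗮ) :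
    specProj T I x = 0 := by
  simp [specProj, Submodule.orthogonalProjectionOnto_apply_of_mem_orthogonal hx]

lemma single_mem_orthogonal {ι : Type*} [Fintype ι] [DecidableEq ι]
    (T : EuclideanSpace ℂ ι →L[ℂ] EuclideanSpace ℂ ι) (I : Set ℝ) (f : ι)
    (h : ∀ μ ∈ I, ∀ u : EuclideanSpace ℂ ι, T u = (μ : ℂ) • u → u f = 0) :
    EuclideanSpace.single f 1 ∈
      (⨆ μ ∈ I, Module.End.eigenspace
        (↑T : EuclideanSpace ℂ ι →ₗ[ℂ] EuclideanSpace ℂ ι) (μ : ℂ))ᗮ := by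
  rw [Submodule.mem_orthogonal]
  intro u hu
  have hS : (⨆ μ ∈ I, Module.End.eigenspace
      (↑T : EuclideanSpace ℂ ι →ₗ[ℂ] EuclideanSpace ℂ ι) (μ : ℂ)) ≤
      LinearMap.ker (EuclideanSpace.projₗ (𝕜 := ℂ) f) := by
    refine iSup₂_le fun μ hμ u' hu' => ?_
    rw [Module.End.mem_eigenspace_iff] at hu'
    exact h μ hμ u' hu'
  have huf : u f = 0 := hS hu
  rw [EuclideanSpace.inner_single_right]
  simp [huf]

set_option maxHeartbeats 1000000 in
/-- Abstract form of the counterexample computation. -/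
lemma main_aux {V : Type*} [NormedAddCommGroup V] [InnerProductSpace ℂ V]
    [FiniteDimensional ℂ V] (Hop B : V →L[ℂ] V) (M E : ℝ) (x : V) (hx1 : ‖x‖ = 1)
    (hB : B x = 0) (hH : Hop x = (E : ℂ) • x) (hME : M ≤ E)
    (hP1 : specProj (Hop - B) (Set.Ioo (-M) M) x = 0) :
    E - M ≤ ‖(Hop - (B + etrunc (Hop - B) M)) * specProj (B + etrunc (Hop - B) M)
      (Set.Iic M)‖ := by
  have hH' : (Hop - B) x = (E : ℂ) • x := by
    rw [ContinuousLinearMap.sub_apply, hH, hB, sub_zero]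
  have hP2 : specProj (Hop - B) (Set.Ici M) x = x :=
    specProj_fix _ _ E hME x hH'
  have hEtr : etrunc (Hop - B) M x = (M : ℂ) • x := by
    rw [etrunc, ContinuousLinearMap.add_apply, ContinuousLinearMap.mul_apply, hP1,
      map_zero, zero_add, ContinuousLinearMap.smul_apply, hP2]
  have hHbar : (B + etrunc (Hop - B) M) x = (M : ℂ) • x := by
    rw [ContinuousLinearMap.add_apply, hB, hEtr, zero_add]
  have hP3 : specProj (B + etrunc (Hop - B) M) (Set.Iic M) x = x :=
    specProj_fix _ _ M Set.self_mem_Iic x hHbar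
  have hfinal : ((Hop - (B + etrunc (Hop - B) M)) * specProj (B + etrunc (Hop - B) M)
      (Set.Iic M)) x = ((E - M : ℝ) : ℂ) • x := by
    rw [ContinuousLinearMap.mul_apply, hP3, ContinuousLinearMap.sub_apply, hH, hHbar,
      ← sub_smul]
    push_cast
    ring_nf
  calc E - M = ‖((E - M : ℝ) : ℂ) • x‖ := by
        rw [norm_smul, hx1, mul_one, Complex.norm_real, Real.norm_eq_abs,
          abs_of_nonneg (by linarith)]
    _ = ‖((Hop - (B + etrunc (Hop - B) M)) * specProj (B + etrunc (Hop - B) M)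
          (Set.Iic M)) x‖ := by rw [hfinal]
    _ ≤ ‖(Hop - (B + etrunc (Hop - B) M)) * specProj (B + etrunc (Hop - B) M)
          (Set.Iic M)‖ * ‖x‖ := ContinuousLinearMap.le_opNorm _ _
    _ = _ := by rw [hx1, mul_one]

/-- The staggered configuration: alternating on each half, equal across the middle bond. -/
def myf (N : ℕ) : Fin (2 * N) → Fin 2 := fun j =>
  if j.1 < N then ⟨j.1 % 2, by omega⟩ else ⟨(j.1 + 1) % 2, by omega⟩

lemma coe_myf (N : ℕ) (j : Fin (2 * N)) :
    ((myf N j : Fin 2) : ℕ) = if j.1 < N then j.1 % 2 else (j.1 + 1) % 2 := by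
  unfold myf
  split <;> rfl

lemma bondOp_coef (N : ℕ) (hodd : Odd N) (k : Fin (2 * N - 1)) :
    (1 - (-1 : ℂ) ^ (((myf N ⟨k.1, by have := k.2; omega⟩ : Fin 2) : ℕ) +
      ((myf N ⟨k.1 + 1, by have := k.2; omega⟩ : Fin 2) : ℕ))) =
    if k.1 = N - 1 then 0 else 2 := by
  have hk := k.2
  have hN : N % 2 = 1 := Nat.odd_iff.mp hodd
  rw [coe_myf, coe_myf]
  simp only []
  have he : ((if (k.1 : ℕ) < N then k.1 % 2 else (k.1 + 1) % 2) +
      (if (k.1 + 1 : ℕ) < N then (k.1 + 1) % 2 else (k.1 + 1 + 1) % 2)) =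
      if k.1 = N - 1 then 0 else 1 := by
    split_ifs <;> omega
  rw [he]
  split_ifs <;> norm_num

lemma sum_coef (N : ℕ) (hpos : 0 < N) :
    (∑ k : Fin (2 * N - 1), if k.1 = N - 1 then (0 : ℂ) else 2) =
      ((4 * (N : ℝ) - 4 : ℝ) : ℂ) := by
  have h1 : ∀ k : Fin (2 * N - 1),
      (if k.1 = N - 1 then (0 : ℂ) else 2) =
        2 - (if k = (⟨N - 1, by have := hpos; omega⟩ : Fin (2 * N - 1)) then (2 : ℂ) else 0) := by
    intro k
    by_cases h : k = (⟨N - 1, by have := hpos; omega⟩ : Fin (2 * N - 1))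
    · rw [if_pos h, if_pos (by rw [h]), sub_self]
    · rw [if_neg h, if_neg (fun hv => h (Fin.ext hv)), sub_zero]
  rw [Finset.sum_congr rfl fun k _ => h1 k, Finset.sum_sub_distrib,
    Finset.sum_ite_eq' Finset.univ _ (fun _ => (2 : ℂ)), if_pos (Finset.mem_univ _),
    Finset.sum_const, Finset.card_univ, Fintype.card_fin]
  have h2 : ((2 * N - 1 : ℕ) : ℂ) = 2 * (N : ℂ) - 1 := by
    push_cast [Nat.cast_sub (by omega : 1 ≤ 2 * N)]
    ring
  rw [nsmul_eq_mul, h2]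
  push_cast
  ring

lemma sum_bond_apply (N : ℕ) (hodd : Odd N) (hpos : 0 < N)
    (u : EuclideanSpace ℂ (Fin (2 * N) → Fin 2)) :
    ((∑ k : Fin (2 * N - 1), bondOp N k) u) (myf N) =
      ((4 * (N : ℝ) - 4 : ℝ) : ℂ) * u (myf N) := by
  rw [ContinuousLinearMap.sum_apply, WithLp.ofLp_sum, Finset.sum_apply]
  have : ∀ k : Fin (2 * N - 1),
      (bondOp N k u) (myf N) = (if k.1 = N - 1 then (0 : ℂ) else 2) * u (myf N) := by
    intro k
    rw [bondOp, diagOp_apply, bondOp_coef N hodd k]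
  rw [Finset.sum_congr rfl fun k _ => this k, ← Finset.sum_mul, sum_coef N hpos]

lemma sum_bond_single (N : ℕ) (hodd : Odd N) (hpos : 0 < N) :
    (∑ k : Fin (2 * N - 1), bondOp N k) (EuclideanSpace.single (myf N) 1) =
      ((4 * (N : ℝ) - 4 : ℝ) : ℂ) • EuclideanSpace.single (myf N) 1 := by
  rw [ContinuousLinearMap.sum_apply]
  have : ∀ k : Fin (2 * N - 1),
      bondOp N k (EuclideanSpace.single (myf N) 1) =
        (if k.1 = N - 1 then (0 : ℂ) else 2) • EuclideanSpace.single (myf N) 1 := by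
    intro k
    rw [bondOp, diagOp_single, bondOp_coef N hodd k]
  rw [Finset.sum_congr rfl fun k _ => this k, ← Finset.sum_smul, sum_coef N hpos]

lemma bond_mid_apply (N : ℕ) (hodd : Odd N) (hpos : 0 < N)
    (u : EuclideanSpace ℂ (Fin (2 * N) → Fin 2)) :
    (bondOp N (⟨N - 1, by have := hpos; omega⟩ : Fin (2 * N - 1)) u) (myf N) = 0 := by
  rw [bondOp, diagOp_apply, bondOp_coef N hodd, if_pos rfl, zero_mul]

/-- Counterexample (Appendix A): for the ferromagnetic Ising chain of `2N` spins
(`N` odd) cut in the middle, with `B = h_N` the middle bond, `H' = H − B`, and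
`H̄ = B + etrunc H' M`, the operator-norm quantity `‖(H − H̄)·E^{H̄}((−∞,M])‖` is
at least `4N − 4 − M`, hence diverges with the volume. -/
theorem stmt_16 (N : ℕ) (hodd : Odd N) (hpos : 0 < N) (M : ℝ) (hM2 : 2 < M)
    (hM4 : M < 4 * (N : ℝ) - 4) :
    4 * (N : ℝ) - 4 - M ≤
      ‖((∑ k : Fin (2 * N - 1), bondOp N k) -
          (bondOp N ⟨N - 1, by omega⟩ +
            etrunc ((∑ k : Fin (2 * N - 1), bondOp N k) - bondOp N ⟨N - 1, by omega⟩) M)) *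
        specProj
          (bondOp N ⟨N - 1, by omega⟩ +
            etrunc ((∑ k : Fin (2 * N - 1), bondOp N k) - bondOp N ⟨N - 1, by omega⟩) M)
          (Set.Iic M)‖ := by
  have key := main_aux (∑ k : Fin (2 * N - 1), bondOp N k)
    (bondOp N (⟨N - 1, by omega⟩ : Fin (2 * N - 1))) M (4 * (N : ℝ) - 4)
    (EuclideanSpace.single (myf N) 1) ?_ ?_ ?_ (le_of_lt hM4) ?_
  · exact key
  · simp
  · rw [bondOp, diagOp_single, bondOp_coef N hodd, if_pos rfl, zero_smul]
  · exact sum_bond_single N hodd hpos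
  · -- specProj (H') (Ioo (-M) M) x = 0
    apply specProj_zero
    apply single_mem_orthogonal
    intro μ hμ u hu
    have h1 : (((∑ k : Fin (2 * N - 1), bondOp N k) -
        bondOp N (⟨N - 1, by omega⟩ : Fin (2 * N - 1))) u) (myf N) =
        ((4 * (N : ℝ) - 4 : ℝ) : ℂ) * u (myf N) := by
      rw [ContinuousLinearMap.sub_apply, PiLp.sub_apply, sum_bond_apply N hodd hpos,
        bond_mid_apply N hodd hpos, sub_zero]
    have h2 : (((∑ k : Fin (2 * N - 1), bondOp N k) -
        bondOp N (⟨N - 1, by omega⟩ : Fin (2 * N - 1))) u) (myf N) =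
        (μ : ℂ) * u (myf N) := by
      rw [hu, PiLp.smul_apply, smul_eq_mul]
    have h3 : (((4 * (N : ℝ) - 4 : ℝ) : ℂ) - (μ : ℂ)) * u (myf N) = 0 := by
      rw [sub_mul, ← h1, ← h2, sub_self]
    rcases mul_eq_zero.mp h3 with h | h
    · exfalso
      have : (4 * (N : ℝ) - 4 : ℝ) = μ := by
        exact_mod_cast sub_eq_zero.mp h
      have hμ' := hμ.2
      linarith
    · exact h
end

section
/- Let V be a finite-dimensional complex inner product space, let H and W be self-adjoint linear endomorphisms of V, and let Δ > ‖W‖. Then rank E^{H−W}((−Δ+‖W‖, Δ−‖W‖)) ≤ rank E^H((−Δ, Δ)). -/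
section Aux

variable {V : Type*} [NormedAddCommGroup V] [InnerProductSpace ℂ V] [FiniteDimensional ℂ V]

local notation "⟪" x ", " y "⟫" => @inner ℂ _ _ x y

/-- The spectral subspace. -/
noncomputable def specSub (T : V →L[ℂ] V) (I : Set ℝ) : Submodule ℂ V :=
  ⨆ μ ∈ I, Module.End.eigenspace (↑T : V →ₗ[ℂ] V) (μ : ℂ)

lemma range_specProj (T : V →L[ℂ] V) (I : Set ℝ) :
    LinearMap.range ((specProj T I : V →L[ℂ] V) : V →ₗ[ℂ] V) = specSub T I := by
  apply le_antisymm
  · rintro x ⟨y, rfl⟩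
    exact (Submodule.orthogonalProjectionOnto (specSub T I) y).2
  · intro x hx
    refine ⟨x, ?_⟩
    show ((Submodule.orthogonalProjectionOnto (specSub T I) x : V)) = x
    exact Submodule.starProjection_eq_self_iff.mpr hx

variable {T : V →L[ℂ] V} (hT : (T : V →ₗ[ℂ] V).IsSymmetric)

include hT

/-- Coefficient vanishing: if `v` is in the spectral subspace and the `i`-th eigenvalue
is not in `S`, then the `i`-th coefficient of `v` vanishes. -/
lemma coeff_eq_zero_of_mem {S : Set ℝ} {v : V} (hv : v ∈ specSub T S)
    (i : Fin (Module.finrank ℂ V)) (hi : hT.eigenvalues rfl i ∉ S) :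
    (hT.eigenvectorBasis rfl).repr v i = 0 := by
  rw [OrthonormalBasis.repr_apply_apply]
  have hb : hT.eigenvectorBasis rfl i ∈
      Module.End.eigenspace (T : V →ₗ[ℂ] V) ((hT.eigenvalues rfl i : ℝ) : ℂ) :=
    (hT.hasEigenvector_eigenvectorBasis rfl i).1
  have hle : specSub T S ≤ (ℂ ∙ (hT.eigenvectorBasis rfl i))ᗮ := by
    refine iSup₂_le fun s hs => ?_
    intro w hw
    rw [Submodule.mem_orthogonal_singleton_iff_inner_right]
    have hne : ((hT.eigenvalues rfl i : ℝ) : ℂ) ≠ (s : ℂ) := by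
      simp only [ne_eq, Complex.ofReal_inj]
      rintro rfl
      exact hi hs
    exact hT.orthogonalFamily_eigenspaces hne ⟨_, hb⟩ ⟨w, hw⟩
  exact Submodule.mem_orthogonal_singleton_iff_inner_right.mp (hle hv)

lemma coeff_eq_zero_of_mem_orthogonal {S : Set ℝ} {v : V} (hv : v ∈ (specSub T S)ᗮ)
    (i : Fin (Module.finrank ℂ V)) (hi : hT.eigenvalues rfl i ∈ S) :
    (hT.eigenvectorBasis rfl).repr v i = 0 := by
  rw [OrthonormalBasis.repr_apply_apply]
  have hb : hT.eigenvectorBasis rfl i ∈ specSub T S := by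
    apply Submodule.mem_iSup_of_mem (hT.eigenvalues rfl i)
    apply Submodule.mem_iSup_of_mem hi
    exact (hT.hasEigenvector_eigenvectorBasis rfl i).1
  exact (Submodule.mem_orthogonal _ _).mp hv _ hb

/-- Parseval-type formula for `‖T v‖ ^ 2`. -/
lemma norm_apply_sq (v : V) :
    ‖T v‖ ^ 2 = ∑ i, (hT.eigenvalues rfl i) ^ 2 * ‖(hT.eigenvectorBasis rfl).repr v i‖ ^ 2 := by
  have h1 : ‖T v‖ = ‖(hT.eigenvectorBasis rfl).repr (T v)‖ :=
    ((hT.eigenvectorBasis rfl).repr.norm_map (T v)).symm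
  rw [h1, EuclideanSpace.norm_eq, Real.sq_sqrt (by positivity)]
  refine Finset.sum_congr rfl fun i _ => ?_
  have h2 : (hT.eigenvectorBasis rfl).repr (T v) i
      = hT.eigenvalues rfl i * (hT.eigenvectorBasis rfl).repr v i :=
    hT.eigenvectorBasis_apply_self_apply rfl v i
  rw [h2, norm_mul, mul_pow, Complex.norm_real, Real.norm_eq_abs, sq_abs]

lemma norm_sq_eq_sum (v : V) :
    ‖v‖ ^ 2 = ∑ i, ‖(hT.eigenvectorBasis rfl).repr v i‖ ^ 2 := by
  have h1 : ‖v‖ = ‖(hT.eigenvectorBasis rfl).repr v‖ :=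
    ((hT.eigenvectorBasis rfl).repr.norm_map v).symm
  rw [h1, EuclideanSpace.norm_eq, Real.sq_sqrt (by positivity)]

/-- Strict upper bound on `‖T v‖` for nonzero `v` in a spectral subspace. -/
lemma norm_apply_lt {S : Set ℝ} {v : V} (hv : v ∈ specSub T S) (hv0 : v ≠ 0)
    {c : ℝ} (hc : ∀ s ∈ S, |s| < c) : ‖T v‖ < c * ‖v‖ := by
  have hvpos : 0 < ‖v‖ := norm_pos_iff.mpr hv0
  obtain ⟨j, hj⟩ : ∃ j, (hT.eigenvectorBasis rfl).repr v j ≠ 0 := by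
    by_contra h
    push_neg at h
    apply hv0
    apply (hT.eigenvectorBasis rfl).repr.injective
    ext i
    simp [h i]
  have hmemj : hT.eigenvalues rfl j ∈ S := by
    by_contra hns
    exact hj (coeff_eq_zero_of_mem hT hv j hns)
  have hcpos : 0 < c := lt_of_le_of_lt (abs_nonneg _) (hc _ hmemj)
  have key : ‖T v‖ ^ 2 < (c * ‖v‖) ^ 2 := by
    rw [norm_apply_sq hT v, mul_pow, norm_sq_eq_sum hT v, Finset.mul_sum]
    refine Finset.sum_lt_sum (fun i _ => ?_) ⟨j, Finset.mem_univ j, ?_⟩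
    · by_cases h0 : (hT.eigenvectorBasis rfl).repr v i = 0
      · simp [h0]
      · have hmem : hT.eigenvalues rfl i ∈ S := by
          by_contra hns
          exact h0 (coeff_eq_zero_of_mem hT hv i hns)
        have := hc _ hmem
        have h1 : (hT.eigenvalues rfl i) ^ 2 ≤ c ^ 2 := by
          rw [← sq_abs]
          exact pow_le_pow_left₀ (abs_nonneg _) this.le 2
        exact mul_le_mul_of_nonneg_right h1 (by positivity)
    · have := hc _ hmemj
      have h1 : (hT.eigenvalues rfl j) ^ 2 < c ^ 2 := by
        rw [← sq_abs]
        exact pow_lt_pow_left₀ this (abs_nonneg _) (by norm_num)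
      have h2 : (0:ℝ) < ‖(hT.eigenvectorBasis rfl).repr v j‖ ^ 2 :=
        pow_pos (norm_pos_iff.mpr hj) 2
      exact mul_lt_mul_of_pos_right h1 h2
  exact lt_of_pow_lt_pow_left₀ 2 (by positivity) key

/-- Lower bound on `‖T v‖` for `v` orthogonal to a spectral subspace. -/
lemma le_norm_apply {S : Set ℝ} {v : V} (hv : v ∈ (specSub T S)ᗮ)
    {c : ℝ} (hc0 : 0 ≤ c) (hc : ∀ i, hT.eigenvalues rfl i ∉ S → c ≤ |hT.eigenvalues rfl i|) :
    c * ‖v‖ ≤ ‖T v‖ := by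
  have key : (c * ‖v‖) ^ 2 ≤ ‖T v‖ ^ 2 := by
    rw [norm_apply_sq hT v, mul_pow, norm_sq_eq_sum hT v, Finset.mul_sum]
    refine Finset.sum_le_sum fun i _ => ?_
    by_cases h0 : (hT.eigenvectorBasis rfl).repr v i = 0
    · simp [h0]
    · have hmem : hT.eigenvalues rfl i ∉ S := by
        intro hs
        exact h0 (coeff_eq_zero_of_mem_orthogonal hT hv i hs)
      have h1 : c ^ 2 ≤ (hT.eigenvalues rfl i) ^ 2 := by
        rw [← sq_abs (hT.eigenvalues rfl i)]
        exact pow_le_pow_left₀ hc0 (hc i hmem) 2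
      exact mul_le_mul_of_nonneg_right h1 (by positivity)
  exact le_of_pow_le_pow_left₀ (by norm_num) (norm_nonneg _) key

end Aux

/-- Rank comparison under a bounded perturbation: for self-adjoint `H, W` with
`Δ > ‖W‖`, `rank E^{H−W}((−Δ+‖W‖, Δ−‖W‖)) ≤ rank E^H((−Δ, Δ))`. -/
theorem stmt_17 {V : Type*} [NormedAddCommGroup V] [InnerProductSpace ℂ V]
    [FiniteDimensional ℂ V]
    (H W : V →L[ℂ] V) (hH : IsSelfAdjoint H) (hW : IsSelfAdjoint W)
    (Δ : ℝ) (hΔ : ‖W‖ < Δ) :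
    Module.finrank ℂ
        (LinearMap.range ((specProj (H - W) (Set.Ioo (-Δ + ‖W‖) (Δ - ‖W‖))) : V →ₗ[ℂ] V)) ≤
      Module.finrank ℂ (LinearMap.range ((specProj H (Set.Ioo (-Δ) Δ)) : V →ₗ[ℂ] V)) := by
  rw [range_specProj, range_specProj]
  set E := specSub (H - W) (Set.Ioo (-Δ + ‖W‖) (Δ - ‖W‖)) with hE
  set F := specSub H (Set.Ioo (-Δ) Δ) with hF
  have hHW : ((H - W : V →L[ℂ] V) : V →ₗ[ℂ] V).IsSymmetric := (hH.sub hW).isSymmetric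
  have hHs : ((H : V →L[ℂ] V) : V →ₗ[ℂ] V).IsSymmetric := hH.isSymmetric
  have hdisj : E ⊓ Fᗮ = ⊥ := by
    rw [Submodule.eq_bot_iff]
    rintro v ⟨hvE, hvF⟩
    by_contra hv0
    have h1 : ‖(H - W) v‖ < (Δ - ‖W‖) * ‖v‖ := by
      refine norm_apply_lt hHW hvE hv0 fun s hs => ?_
      rw [abs_lt]
      exact ⟨by linarith [hs.1], hs.2⟩
    have h2 : Δ * ‖v‖ ≤ ‖H v‖ := by
      refine le_norm_apply hHs hvF (by linarith [norm_nonneg W]) fun i hi => ?_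
      rw [Set.mem_Ioo, not_and_or, not_lt, not_lt] at hi
      rw [le_abs]
      rcases hi with h | h
      · right; linarith
      · left; linarith
    have h3 : ‖W v‖ ≤ ‖W‖ * ‖v‖ := W.le_opNorm v
    have h4 : ‖H v‖ ≤ ‖(H - W) v‖ + ‖W v‖ := by
      have : H v = (H - W) v + W v := by simp
      rw [this]
      exact norm_add_le _ _
    linarith
  have h5 := Submodule.finrank_sup_add_finrank_inf_eq E Fᗮ
  rw [hdisj] at h5
  have h6 : Module.finrank ℂ ↥(E ⊔ Fᗮ) ≤ Module.finrank ℂ V :=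
    Submodule.finrank_le _
  have h7 := Submodule.finrank_add_finrank_orthogonal F
  rw [finrank_bot] at h5
  omega
end

section
/- Let V be a finite-dimensional complex inner product space, let H be a self-adjoint linear endomorphism of V such that every eigenvalue of H lies in {0} ∪ [Δ,∞) for some Δ > 0 and the eigenspace of H for the eigenvalue 0 is one-dimensional, spanned by a unit vector Ω. Let W be a self-adjoint linear endomorphism of V with 0 < 2‖W‖ < Δ, set H̃ := H − W, and let Ω̃ be a unit vector spanning the range of E^{H̃}([−‖W‖, ‖W‖]) (this range is one-dimensional). Then √(1 − |⟨Ω, Ω̃⟩|²) ≤ ‖W‖ / (Δ − ‖W‖); moreover, if Ω̃ is chosen so that ⟨Ω, Ω̃⟩ ≥ 0, then ‖Ω − Ω̃‖ ≤ √2·‖W‖ / (Δ − ‖W‖). -/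
open scoped ComplexOrder
open scoped InnerProductSpace

theorem specLower {V : Type*} [NormedAddCommGroup V] [InnerProductSpace ℂ V]
    [FiniteDimensional ℂ V] (H : V →L[ℂ] V) (hsymH : (↑H : V →ₗ[ℂ] V).IsSymmetric)
    (Δ : ℝ)
    (hspec : ∀ μ : ℝ, Module.End.HasEigenvalue (↑H : V →ₗ[ℂ] V) (μ : ℂ) →
      μ = 0 ∨ Δ ≤ μ)
    (Ω : V)
    (hΩ : Module.End.eigenspace (↑H : V →ₗ[ℂ] V) 0 = Submodule.span ℂ {Ω})
    (r : V) (hor : (inner ℂ Ω r : ℂ) = 0) :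
    Δ * ‖r‖ ^ 2 ≤ (inner ℂ r (H r) : ℂ).re := by
  classical
  have hn : Module.finrank ℂ V = Module.finrank ℂ V := rfl
  set b := hsymH.eigenvectorBasis hn with hb
  set μs := hsymH.eigenvalues hn with hμs
  set a : Fin (Module.finrank ℂ V) → ℂ := fun i => b.repr r i with ha
  have e2 : ∀ i, (inner ℂ r (b i) : ℂ) = (starRingEnd ℂ) (a i) := by
    intro i
    rw [ha]
    simp only [b.repr_apply_apply r i]
    exact (inner_conj_symm _ _).symm
  have hinner : (inner ℂ r (H r) : ℂ) = ∑ i, (starRingEnd ℂ) (a i) * ((μs i : ℂ) * a i) := by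
    rw [← b.sum_inner_mul_inner r (H r)]
    refine Finset.sum_congr rfl fun i _ => ?_
    have e1 : b.repr ((↑H : V →ₗ[ℂ] V) r) i = μs i * b.repr r i :=
      hsymH.eigenvectorBasis_apply_self_apply hn r i
    rw [e2 i, ← b.repr_apply_apply (H r) i]
    show _ * b.repr ((↑H : V →ₗ[ℂ] V) r) i = _
    rw [e1]
  have hnorm : ‖r‖ ^ 2 = ∑ i, Complex.normSq (a i) := by
    have h1 : (inner ℂ r r : ℂ) = ∑ i, (starRingEnd ℂ) (a i) * a i := by
      rw [← b.sum_inner_mul_inner r r]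
      refine Finset.sum_congr rfl fun i _ => ?_
      rw [e2 i, ← b.repr_apply_apply r i]
    have h2 : ‖r‖ ^ 2 = (∑ i, (starRingEnd ℂ) (a i) * a i).re := by
      rw [← h1]; exact (inner_self_eq_norm_sq (𝕜 := ℂ) r).symm
    rw [h2, Complex.re_sum]
    refine Finset.sum_congr rfl fun i _ => ?_
    rw [mul_comm, Complex.mul_conj]
    simp
  have hzero : ∀ i, μs i = 0 → a i = 0 := by
    intro i hi
    have hbi : b i ∈ Module.End.eigenspace (↑H : V →ₗ[ℂ] V) 0 := by
      have h3 := hsymH.apply_eigenvectorBasis hn i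
      rw [← hb, ← hμs] at h3
      rw [Module.End.mem_eigenspace_iff, h3, hi]
      simp
    rw [hΩ, Submodule.mem_span_singleton] at hbi
    obtain ⟨β, hβ⟩ := hbi
    rw [ha]
    simp only [b.repr_apply_apply r i, ← hβ, inner_smul_left, hor, mul_zero]
  have hterm : ∀ i, Δ * Complex.normSq (a i) ≤ μs i * Complex.normSq (a i) := by
    intro i
    rcases hspec (μs i) (hsymH.hasEigenvalue_eigenvalues hn i) with h | h
    · rw [hzero i h, h]; simp
    · exact mul_le_mul_of_nonneg_right h (Complex.normSq_nonneg _)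
  calc Δ * ‖r‖ ^ 2 = ∑ i, Δ * Complex.normSq (a i) := by
        rw [hnorm, Finset.mul_sum]
    _ ≤ ∑ i, μs i * Complex.normSq (a i) := Finset.sum_le_sum fun i _ => hterm i
    _ = (inner ℂ r (H r) : ℂ).re := by
        rw [hinner, Complex.re_sum]
        refine Finset.sum_congr rfl fun i _ => ?_
        rw [show (starRingEnd ℂ) (a i) * ((μs i : ℂ) * a i)
              = (μs i : ℂ) * ((a i) * (starRingEnd ℂ) (a i)) by ring, Complex.mul_conj]
        norm_cast

set_option maxHeartbeats 1000000 in
/-- Ground-state overlap under range truncation: with `H` gapped (`{0} ∪ [Δ,∞)`)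
with one-dimensional, `Ω`-spanned ground space, and `W` self-adjoint with
`0 < 2‖W‖ < Δ`, if `Ω̃` is a unit vector spanning the (one-dimensional) range of
`E^{H−W}([−‖W‖,‖W‖])`, then `√(1 − |⟨Ω,Ω̃⟩|²) ≤ ‖W‖/(Δ−‖W‖)`; moreover if
`⟨Ω,Ω̃⟩ ≥ 0` then `‖Ω − Ω̃‖ ≤ √2·‖W‖/(Δ−‖W‖)`. -/
theorem stmt_19 {V : Type*} [NormedAddCommGroup V] [InnerProductSpace ℂ V]
    [FiniteDimensional ℂ V]
    (H W : V →L[ℂ] V) (hH : IsSelfAdjoint H) (hW : IsSelfAdjoint W)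
    (Δ : ℝ) (hΔpos : 0 < Δ)
    (hspec : ∀ μ : ℝ, Module.End.HasEigenvalue (↑H : V →ₗ[ℂ] V) (μ : ℂ) →
      μ = 0 ∨ Δ ≤ μ)
    (h0simple : Module.finrank ℂ (Module.End.eigenspace (↑H : V →ₗ[ℂ] V) 0) = 1)
    (hWpos : 0 < 2 * ‖W‖) (hWΔ : 2 * ‖W‖ < Δ)
    (Ω : V) (hΩunit : ‖Ω‖ = 1)
    (hΩ : Module.End.eigenspace (↑H : V →ₗ[ℂ] V) 0 = Submodule.span ℂ {Ω})
    (Ωt : V) (hΩtunit : ‖Ωt‖ = 1)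
    (hΩt : LinearMap.range ((specProj (H - W) (Set.Icc (-‖W‖) ‖W‖)) : V →ₗ[ℂ] V) =
      Submodule.span ℂ {Ωt}) :
    Real.sqrt (1 - ‖(inner ℂ Ω Ωt : ℂ)‖ ^ 2) ≤ ‖W‖ / (Δ - ‖W‖) ∧
      (0 ≤ (inner ℂ Ω Ωt : ℂ) → ‖Ω - Ωt‖ ≤ Real.sqrt 2 * ‖W‖ / (Δ - ‖W‖)) := by
  classical
  have hWn : 0 < ‖W‖ := by linarith
  have hgap : 0 < Δ - ‖W‖ := by linarith
  have hsymH : (↑H : V →ₗ[ℂ] V).IsSymmetric :=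
    ContinuousLinearMap.isSelfAdjoint_iff_isSymmetric.mp hH
  have hsymHt : (↑(H - W) : V →ₗ[ℂ] V).IsSymmetric :=
    ContinuousLinearMap.isSelfAdjoint_iff_isSymmetric.mp (hH.sub hW)
  have hΩtne : Ωt ≠ 0 := fun h => by simp [h] at hΩtunit
  set c : ℂ := (inner ℂ Ω Ωt : ℂ) with hcdef
  set r : V := Ωt - c • Ω with hrdef
  have hΩΩ : (inner ℂ Ω Ω : ℂ) = 1 := by
    rw [inner_self_eq_norm_sq_to_K, hΩunit]; norm_num
  have hor : (inner ℂ Ω r : ℂ) = 0 := by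
    rw [hrdef, inner_sub_right, inner_smul_right, hΩΩ, mul_one, ← hcdef, sub_self]
  -- H Ω = 0
  have hHΩ : H Ω = 0 := by
    have hm : Ω ∈ Module.End.eigenspace (↑H : V →ₗ[ℂ] V) 0 := by
      rw [hΩ]; exact Submodule.mem_span_singleton_self Ω
    rw [Module.End.mem_eigenspace_iff] at hm
    simpa using hm
  -- range of specProj is K
  set K := ⨆ μ ∈ Set.Icc (-‖W‖) ‖W‖,
      Module.End.eigenspace (↑(H - W) : V →ₗ[ℂ] V) (μ : ℂ) with hKdef
  have hrange : LinearMap.range ((specProj (H - W) (Set.Icc (-‖W‖) ‖W‖)) : V →ₗ[ℂ] V) = K := by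
    apply le_antisymm
    · rintro x ⟨y, rfl⟩
      exact (K.orthogonalProjectionOnto y).2
    · intro x hx
      refine ⟨x, ?_⟩
      show K.subtypeL (K.orthogonalProjectionOnto x) = x
      exact Submodule.starProjection_eq_self_iff.mpr hx
  have hKspan : K = Submodule.span ℂ {Ωt} := by rw [← hrange, hΩt]
  have hΩtK : Ωt ∈ K := by rw [hKspan]; exact Submodule.mem_span_singleton_self Ωt
  -- K is invariant
  have hKinv : ∀ x ∈ K, (↑(H - W) : V →ₗ[ℂ] V) x ∈ K := by
    intro x hx
    have hmap : Submodule.map (↑(H - W) : V →ₗ[ℂ] V) K ≤ K := by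
      rw [hKdef]
      simp_rw [Submodule.map_iSup]
      apply iSup₂_le
      intro μ hμ
      refine le_trans ?_ (le_iSup₂ (f := fun μ (_ : μ ∈ Set.Icc (-‖W‖) ‖W‖) =>
        Module.End.eigenspace (↑(H - W) : V →ₗ[ℂ] V) (μ : ℂ)) μ hμ)
      rintro y ⟨z, hz, rfl⟩
      rw [SetLike.mem_coe] at hz
      rw [Module.End.mem_eigenspace_iff] at hz ⊢
      rw [hz, map_smul, hz]
    exact hmap ⟨x, hx, rfl⟩
  -- (H - W) Ωt = λ • Ωt for some real λ with |λ| ≤ ‖W‖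
  obtain ⟨aev, haev⟩ : ∃ aev : ℂ, (H - W) Ωt = aev • Ωt := by
    have := hKinv Ωt hΩtK
    rw [hKspan, Submodule.mem_span_singleton] at this
    obtain ⟨aev, h⟩ := this
    exact ⟨aev, h.symm⟩
  have hΩteig : Ωt ∈ Module.End.eigenspace (↑(H - W) : V →ₗ[ℂ] V) aev := by
    rw [Module.End.mem_eigenspace_iff]; exact haev
  obtain ⟨lam, hlamI, hlam⟩ : ∃ μ ∈ Set.Icc (-‖W‖) ‖W‖, (μ : ℂ) = aev := by
    by_contra hcon
    push_neg at hcon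
    have hle : K ≤ (Module.End.eigenspace (↑(H - W) : V →ₗ[ℂ] V) aev)ᗮ := by
      rw [hKdef]
      apply iSup₂_le
      intro μ hμ y hy
      rw [Submodule.mem_orthogonal]
      intro u hu
      exact hsymHt.orthogonalFamily_eigenspaces (Ne.symm (hcon μ hμ)) ⟨u, hu⟩ ⟨y, hy⟩
    have h0 : (inner ℂ Ωt Ωt : ℂ) = 0 :=
      (Submodule.mem_orthogonal _ Ωt).mp (hle hΩtK) Ωt hΩteig
    exact hΩtne (inner_self_eq_zero.mp h0)
  have hlamabs : |lam| ≤ ‖W‖ := abs_le.mpr ⟨hlamI.1, hlamI.2⟩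
  have hHtΩt : (H - W) Ωt = (lam : ℂ) • Ωt := by rw [haev, ← hlam]
  -- key vector y
  set y : V := H r - (lam : ℂ) • r with hydef
  have hΩtdecomp : Ωt = c • Ω + r := by rw [hrdef]; abel
  have hHr : H Ωt = H r := by
    conv_lhs => rw [hΩtdecomp]
    rw [map_add, map_smul, hHΩ, smul_zero, zero_add]
  have hWΩt : W Ωt = y - ((lam : ℂ) * c) • Ω := by
    have h1 : H Ωt - W Ωt = (lam : ℂ) • Ωt := by
      rw [← hHtΩt]; simp
    have h2 : W Ωt = H Ωt - (lam : ℂ) • Ωt := by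
      rw [← h1]; abel
    rw [h2, hHr, hydef]
    conv_lhs => rw [hΩtdecomp]
    rw [smul_add, smul_smul]
    abel
  have hΩy : (inner ℂ Ω y : ℂ) = 0 := by
    rw [hydef, inner_sub_right, inner_smul_right, hor, mul_zero, sub_zero]
    calc (inner ℂ Ω (H r) : ℂ) = inner ℂ (H Ω) r := (hsymH Ω r).symm
      _ = 0 := by rw [hHΩ, inner_zero_left]
  have hyΩ : (inner ℂ y (((lam : ℂ) * c) • Ω) : ℂ) = 0 := by
    rw [inner_smul_right]
    rw [← inner_conj_symm y Ω, hΩy, map_zero, mul_zero]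
  -- ‖y‖ ≤ ‖W‖
  have hynorm : ‖y‖ ≤ ‖W‖ := by
    have h1 : ‖W Ωt‖ ^ 2 = ‖y‖ ^ 2 - 2 * ((inner ℂ y (((lam : ℂ) * c) • Ω) : ℂ)).re
        + ‖((lam : ℂ) * c) • Ω‖ ^ 2 := by
      rw [hWΩt]
      have := norm_sub_sq (𝕜 := ℂ) y (((lam : ℂ) * c) • Ω)
      simpa using this
    rw [hyΩ] at h1
    simp only [Complex.zero_re, mul_zero, sub_zero] at h1
    have h2 : ‖y‖ ^ 2 ≤ ‖W Ωt‖ ^ 2 := by nlinarith [sq_nonneg ‖((lam : ℂ) * c) • Ω‖]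
    have h3 : ‖W Ωt‖ ≤ ‖W‖ := by
      calc ‖W Ωt‖ ≤ ‖W‖ * ‖Ωt‖ := W.le_opNorm Ωt
        _ = ‖W‖ := by rw [hΩtunit, mul_one]
    nlinarith [norm_nonneg y, norm_nonneg (W Ωt)]
  -- lower bound
  have hlower : (Δ - ‖W‖) * ‖r‖ ^ 2 ≤ ‖r‖ * ‖W‖ := by
    have h1 : Δ * ‖r‖ ^ 2 ≤ (inner ℂ r (H r) : ℂ).re :=
      specLower H hsymH Δ hspec Ω hΩ r hor
    have h2 : (inner ℂ r y : ℂ).re = (inner ℂ r (H r) : ℂ).re - lam * ‖r‖ ^ 2 := by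
      have hrr : (inner ℂ r r : ℂ).re = ‖r‖ ^ 2 := by
        simpa using inner_self_eq_norm_sq (𝕜 := ℂ) r
      rw [hydef, inner_sub_right, inner_smul_right, Complex.sub_re,
        Complex.re_ofReal_mul, hrr]
    have h3 : (Δ - lam) * ‖r‖ ^ 2 ≤ (inner ℂ r y : ℂ).re := by rw [h2]; nlinarith
    have h4 : (inner ℂ r y : ℂ).re ≤ ‖r‖ * ‖y‖ := by
      calc (inner ℂ r y : ℂ).re ≤ ‖(inner ℂ r y : ℂ)‖ := Complex.re_le_norm _
        _ = ‖(inner ℂ r y : ℂ)‖ := rfl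
        _ ≤ ‖r‖ * ‖y‖ := norm_inner_le_norm r y
    have h5 : lam ≤ ‖W‖ := le_trans (le_abs_self lam) hlamabs
    nlinarith [norm_nonneg r, norm_nonneg y, sq_nonneg ‖r‖]
  have hrb : ‖r‖ ≤ ‖W‖ / (Δ - ‖W‖) := by
    rcases eq_or_lt_of_le (norm_nonneg r) with h | h
    · rw [← h]
      exact div_nonneg (norm_nonneg W) (le_of_lt hgap)
    · rw [le_div_iff₀ hgap]
      have h6 : ‖r‖ * (‖r‖ * (Δ - ‖W‖)) ≤ ‖r‖ * ‖W‖ := by nlinarith [hlower]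
      exact (mul_le_mul_iff_right₀ h).mp h6
  -- Pythagoras
  have hpyth : 1 = ‖c‖ ^ 2 + ‖r‖ ^ 2 := by
    have h1 : ‖Ωt‖ ^ 2 = ‖c • Ω‖ ^ 2 + 2 * (inner ℂ (c • Ω) r : ℂ).re + ‖r‖ ^ 2 := by
      conv_lhs => rw [hΩtdecomp]
      have := norm_add_sq (𝕜 := ℂ) (c • Ω) r
      exact this
    have h2 : (inner ℂ (c • Ω) r : ℂ) = 0 := by rw [inner_smul_left, hor, mul_zero]
    rw [h2] at h1
    simp only [Complex.zero_re, mul_zero, add_zero] at h1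
    rw [hΩtunit, norm_smul, hΩunit, mul_one] at h1
    linarith [h1]
  constructor
  · have heq : 1 - ‖c‖ ^ 2 = ‖r‖ ^ 2 := by linarith
    rw [show (1 : ℝ) - ‖(inner ℂ Ω Ωt : ℂ)‖ ^ 2 = ‖r‖ ^ 2 from heq,
      Real.sqrt_sq (norm_nonneg r)]
    exact hrb
  · intro hcpos
    have him : c.im = 0 := by
      have := (Complex.le_def.mp hcpos).2
      simpa using this.symm
    have hre : 0 ≤ c.re := by
      have := (Complex.le_def.mp hcpos).1
      simpa using this
    have habs : ‖c‖ = c.re := by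
      rw [Complex.norm_def, Complex.normSq_apply, him, mul_zero, add_zero,
        Real.sqrt_mul_self hre]
    have hre1 : c.re ≤ 1 := by nlinarith [sq_nonneg ‖r‖, hpyth, habs]
    have hsub : ‖Ω - Ωt‖ ^ 2 = 2 - 2 * c.re := by
      have h1 : ‖Ω - Ωt‖ ^ 2 = ‖Ω‖ ^ 2 - 2 * (inner ℂ Ω Ωt : ℂ).re + ‖Ωt‖ ^ 2 := by
        have := norm_sub_sq (𝕜 := ℂ) Ω Ωt
        simpa using this
      rw [hΩunit, hΩtunit, ← hcdef] at h1
      rw [h1]; ring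
    have hineq : ‖Ω - Ωt‖ ^ 2 ≤ 2 * ‖r‖ ^ 2 := by
      have hp2 : 1 = c.re ^ 2 + ‖r‖ ^ 2 := by rw [← habs]; exact hpyth
      rw [hsub]; nlinarith [hp2]
    have hfinal : ‖Ω - Ωt‖ ^ 2 ≤ (Real.sqrt 2 * ‖W‖ / (Δ - ‖W‖)) ^ 2 := by
      calc ‖Ω - Ωt‖ ^ 2 ≤ 2 * ‖r‖ ^ 2 := hineq
        _ ≤ 2 * (‖W‖ / (Δ - ‖W‖)) ^ 2 := by nlinarith [norm_nonneg r, hrb]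
        _ = (Real.sqrt 2 * ‖W‖ / (Δ - ‖W‖)) ^ 2 := by
            rw [mul_div_assoc, mul_pow, Real.sq_sqrt (by norm_num : (0:ℝ) ≤ 2)]
    have hrhs : 0 ≤ Real.sqrt 2 * ‖W‖ / (Δ - ‖W‖) :=
      div_nonneg (mul_nonneg (Real.sqrt_nonneg 2) (norm_nonneg W)) (le_of_lt hgap)
    nlinarith [norm_nonneg (Ω - Ωt)]
end
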